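/- Let (a_n)_{n≥0} be a sequence over a finite alphabet A and suppose there exist integers κ ≥ 2 and n_0 ≥ 1 such that the subword complexity satisfies p(a, n) ≤ κn for all n ≥ n_0. Then for each n ≥ n_0 there exist finite words U, V over A with V nonempty and a rational w > 0 such that: (i) U V^w is a prefix of a; (ii) |U| ≤ 2κ|V|; (iii) n/2 ≤ |V| ≤ κn; (v) |U V^w| / |UV| ≥ 1 + 1/(4κ+2); and (vi) |UV| ≤ (κ+1)n − 1. -/

import Mathlib

/-- The length of the fractional power `V^w` of a word of length `s`:
`⌊w⌋` full copies of `V` followed by the prefix of `V` of length `⌈(w-⌊w⌋)s⌉`. -/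
def powLen (s : ℕ) (w : ℚ) : ℕ := ⌊w⌋.toNat * s + ⌈(w - ⌊w⌋) * s⌉.toNat

/-- `U V^w` is a prefix of the infinite word `a`. -/
def IsPrefixPow {A : Type*} (a : ℕ → A) (U V : List A) (w : ℚ) : Prop :=
  (∀ i < U.length, a i = U.getD i (a 0)) ∧
  ∀ i, U.length ≤ i → i < U.length + powLen V.length w →
    a i = V.getD ((i - U.length) % V.length) (a 0)

/-- The subword complexity of `a`: the number of distinct factors of length `n`. -/
noncomputable def complexity {A : Type*} (a : ℕ → A) (n : ℕ) : ℕ :=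
  Set.ncard {wd : List A | ∃ i, wd = (List.range n).map fun j => a (i + j)}

lemma powLen_div (p T : ℕ) (hT : 0 < T) : powLen T ((p : ℚ) / (T : ℚ)) = p := by
  have hT' : (0:ℚ) < T := by exact_mod_cast hT
  have hfl : ⌊(p:ℚ) / (T:ℚ)⌋ = (p / T : ℕ) := by
    rw [show ((p:ℚ)) = ((p:ℤ):ℚ) by norm_cast, Rat.floor_intCast_div_natCast]
    exact (Int.natCast_div p T).symm
  have h1 : ((p / T : ℕ) : ℚ) * T + ((p % T : ℕ) : ℚ) = p := by
    exact_mod_cast Nat.div_add_mod' p T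
  have hfrac : ((p:ℚ)/(T:ℚ) - (((p / T : ℕ) : ℤ) : ℚ)) * T = ((p % T : ℕ) : ℚ) := by
    rw [sub_mul, div_mul_cancel₀ _ (ne_of_gt hT')]
    rw [Int.cast_natCast]
    linarith
  unfold powLen
  rw [hfl, hfrac, Int.ceil_natCast]
  simp only [Int.toNat_natCast]
  exact Nat.div_add_mod' p T

theorem exists_prefix_repetition_of_linear_complexity
    {A : Type*} [Fintype A] (a : ℕ → A) (κ n₀ : ℕ) (hκ : 2 ≤ κ) (hn₀ : 1 ≤ n₀)
    (hcomp : ∀ n, n₀ ≤ n → complexity a n ≤ κ * n) :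
    ∀ n, n₀ ≤ n → ∃ (U V : List A) (w : ℚ), V ≠ [] ∧ 0 < w ∧
      IsPrefixPow a U V w ∧
      U.length ≤ 2 * κ * V.length ∧
      n ≤ 2 * V.length ∧ V.length ≤ κ * n ∧
      (1 + 1 / (4 * (κ : ℝ) + 2)) * ((U.length : ℝ) + V.length) ≤
        ((U.length : ℝ) + powLen V.length w) ∧
      U.length + V.length ≤ (κ + 1) * n - 1 := by
  intro n hn
  have hn1 : 1 ≤ n := le_trans hn₀ hn
  -- pigeonhole: two positions ≤ κn with the same factor of length n
  have hfin : {wd : List A | ∃ i, wd = (List.range n).map fun j => a (i + j)}.Finite := by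
    apply (List.finite_length_eq A n).subset
    rintro wd ⟨i, rfl⟩
    simp
  obtain ⟨x, hx, y, hy, hxy, hfxy⟩ :=
    Finset.exists_ne_map_eq_of_card_lt_of_maps_to (s := Finset.range (κ*n+1))
      (t := hfin.toFinset) (f := fun i => (List.range n).map fun j => a (i + j))
      (by
        rw [Finset.card_range]
        have := hcomp n hn
        rw [complexity, Set.ncard_eq_toFinset_card _ hfin] at this
        omega)
      (by intro i _; exact (Set.Finite.mem_toFinset hfin).mpr (show ∃ k, _ = _ from ⟨i, rfl⟩))
  -- wlog x < y
  obtain ⟨i, j, hij, hjle, hmatch⟩ :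
      ∃ i j : ℕ, i < j ∧ j ≤ κ * n ∧ ∀ k < n, a (i + k) = a (j + k) := by
    have key : ∀ u v : ℕ, ((List.range n).map fun j => a (u + j)) =
        ((List.range n).map fun j => a (v + j)) → ∀ k < n, a (u + k) = a (v + k) := by
      intro u v h k hk
      have h1 : ((List.range n).map fun j => a (u + j))[k]'(by simpa using hk) =
          ((List.range n).map fun j => a (v + j))[k]'(by simpa using hk) := by
        rw [List.getElem_of_eq h]
      simpa using h1
    rcases lt_or_gt_of_ne hxy with h | h
    · exact ⟨x, y, h, by simpa using Nat.lt_succ_iff.mp (Finset.mem_range.mp hy),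
        key x y hfxy⟩
    · exact ⟨y, x, h, by simpa using Nat.lt_succ_iff.mp (Finset.mem_range.mp hx),
        key y x hfxy.symm⟩
  set t := j - i with ht_def
  have ht : 0 < t := by omega
  have hjit : j = i + t := by omega
  -- periodicity of a with period t on [i, i+t+n)
  have hper : ∀ m, i ≤ m → m < i + t + n → a m = a (i + (m - i) % t) := by
    intro m
    induction m using Nat.strong_induction_on with
    | _ m IH =>
      intro him hm
      rcases lt_or_ge m (i + t) with h | h
      · have : (m - i) % t = m - i := Nat.mod_eq_of_lt (by omega)
        rw [this]
        congr 1
        omega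
      · have hk : m - t - i < n := by omega
        have h1 : a (i + (m - t - i)) = a (j + (m - t - i)) := hmatch _ hk
        have h2 : i + (m - t - i) = m - t := by omega
        have h3 : j + (m - t - i) = m := by omega
        rw [h2, h3] at h1
        rw [← h1, IH (m - t) (by omega) (by omega) (by omega)]
        have h4 : m - t - i = m - i - t := by omega
        rw [h4, ← Nat.mod_eq_sub_mod (by omega : t ≤ m - i)]
  obtain ⟨q, hq_def⟩ : ∃ q, q = (n + 2*t - 1) / (2*t) := ⟨(n + 2*t - 1) / (2*t), rfl⟩
  obtain ⟨T, hT_def⟩ : ∃ T, T = t * q := ⟨t * q, rfl⟩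
  have hq1 : 1 ≤ q := by
    rw [hq_def, Nat.one_le_div_iff (by omega)]
    omega
  have hT1 : 0 < T := by rw [hT_def]; exact Nat.mul_pos ht hq1
  have h2T : 2 * T + 1 ≤ n + 2 * t := by
    have h1 : q * (2*t) ≤ n + 2*t - 1 := by
      rw [hq_def]; exact Nat.div_mul_le_self _ _
    have h2 : 2*T = q*(2*t) := by rw [hT_def]; ring
    omega
  have hnT : n ≤ 2 * T := by
    have hdm := Nat.div_add_mod (n + 2*t - 1) (2*t)
    have hml : (n + 2*t - 1) % (2*t) < 2*t := Nat.mod_lt _ (by omega)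
    have h2 : 2*t*q = 2*T := by rw [hT_def]; ring
    rw [← hq_def] at hdm
    omega
  have hnκ : n ≤ κ * n := Nat.le_mul_of_pos_left n (by omega)
  have hκn1 : (κ+1) * n = κ*n + n := by ring
  have hTκ : T ≤ κ * n ∧ i + T ≤ (κ+1) * n - 1 := by
    rcases le_or_gt n (2*t) with h | h
    · have hq2 : q < 2 := by
        rw [hq_def, Nat.div_lt_iff_lt_mul (by omega)]
        omega
      have hTt : T = t := by
        have : q = 1 := by omega
        rw [hT_def, this, mul_one]
      omega
    · omega
  obtain ⟨hTκ1, hTκ2⟩ := hTκ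
  have hiT : i ≤ 2 * κ * T :=
    calc i ≤ κ * n := by omega
      _ ≤ κ * (2 * T) := Nat.mul_le_mul_left κ hnT
      _ = 2 * κ * T := by ring
  have hTtn : T < t + n := by omega
  have htT : t ∣ T := ⟨q, hT_def⟩
  -- the witnesses
  refine ⟨(List.range i).map a, (List.range T).map (fun k => a (i + k)),
    ((t + n : ℕ) : ℚ) / (T : ℚ), ?_, ?_, ⟨?_, ?_⟩, ?_, ?_, ?_, ?_, ?_⟩
  · simp only [ne_eq, List.map_eq_nil_iff, List.range_eq_nil]
    omega
  · apply div_pos <;> [skip; skip] <;> exact_mod_cast (by omega : (0:ℕ) < _)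
  · intro k hk
    simp only [List.length_map, List.length_range] at hk
    rw [List.getD_eq_getElem _ _ (by simpa using hk)]
    simp
  · intro m him hm
    simp only [List.length_map, List.length_range] at him hm ⊢
    rw [powLen_div (t+n) T hT1] at hm
    have hmod : (m - i) % T < T := Nat.mod_lt _ hT1
    rw [List.getD_eq_getElem _ _ (by simpa using hmod)]
    simp only [List.getElem_map, List.getElem_range]
    have e1 : a m = a (i + (m - i) % t) := hper m him (by omega)
    have e2 : a (i + (m - i) % T) = a (i + (i + (m - i) % T - i) % t) :=
      hper (i + (m - i) % T) (by omega) (by omega)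
    have e3 : (i + (m - i) % T - i) % t = (m - i) % t := by
      rw [Nat.add_sub_cancel_left, Nat.mod_mod_of_dvd _ htT]
    rw [e2, e3, ← e1]
  · simpa using hiT
  · simpa using hnT
  · simpa using hTκ1
  · simp only [List.length_map, List.length_range]
    rw [powLen_div (t+n) T hT1]
    have hA : (i:ℝ) + T ≤ (κ+1) * n - 1 := by
      have : ((i + T : ℕ) : ℝ) ≤ (((κ+1)*n - 1 : ℕ) : ℝ) := by exact_mod_cast hTκ2
      push_cast [Nat.cast_sub (by omega : 1 ≤ (κ+1)*n)] at this
      linarith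
    have hB : 2 * (T:ℝ) + 1 ≤ n + 2 * t := by exact_mod_cast h2T
    have hκR : (2:ℝ) ≤ κ := by exact_mod_cast hκ
    have hnR : (1:ℝ) ≤ n := by exact_mod_cast hn1
    have h42 : (0:ℝ) < 4 * κ + 2 := by linarith
    have hprod : (0:ℝ) ≤ κ * n := by positivity
    have key : ((i:ℝ) + T) ≤ (4*κ+2) * ((t:ℝ) + n - T) := by
      have hB' : (n:ℝ) + 1 ≤ 2 * ((t:ℝ) + n - T) := by linarith
      have := mul_le_mul_of_nonneg_left hB' (by linarith : (0:ℝ) ≤ 2*κ+1)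
      nlinarith
    have hdiv : ((i:ℝ) + T) / (4*κ+2) ≤ (t:ℝ) + n - T := by
      rw [div_le_iff₀ h42]
      nlinarith
    push_cast
    have expand : (1 + 1/(4*(κ:ℝ)+2)) * ((i:ℝ) + T) =
        ((i:ℝ) + T) + ((i:ℝ) + T)/(4*κ+2) := by ring
    rw [expand]
    linarith
  · simp only [List.length_map, List.length_range]
    omega
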